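/- Characterization of the Lagrange multiplier (Lemma after Theorem 2.1, eq. (2.13)): Let y be a dynamic relay solution for (u, ξ) and q(t) := g(u(t)) − y'(t). Then for a.e. t ∈ (0,T): if −1 < y(t) < 1 then q(t) = 0; if y(t) = −1 then q(t) = min(g(u(t)), 0); and if y(t) = 1 then q(t) = max(g(u(t)), 0). In other words, q(t) is the projection of g(u(t)) onto the set ∂χ_{[−1,1]}(y(t)). -/

import Mathlib

open MeasureTheory Set

/-- The function `g(u) = k·(u − ρ₂)⁺ − k·(ρ₁ − u)⁺` driving the dynamic relay. -/
noncomputable def relayG (ρ₁ ρ₂ k u : ℝ) : ℝ :=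
  k * max (u - ρ₂) 0 - k * max (ρ₁ - u) 0

/-- `y` (with a.e. derivative `y'`) is a dynamic relay solution on `[0,T]` for input `u`
and initial state `ξ`: `y ∈ H¹(0,T)` (encoded by `y' ∈ L²(0,T)` together with the
fundamental-theorem-of-calculus representation), `y(0) = ξ`, `|y| ≤ 1` on `[0,T]`, and
`q(t) := g(u(t)) − y'(t)` satisfies `q(t)(z − y(t)) ≤ 0` for all `z ∈ [−1,1]`, a.e. `t`. -/
def IsDynRelay (T ρ₁ ρ₂ k : ℝ) (u : ℝ → ℝ) (ξ : ℝ) (y y' : ℝ → ℝ) : Prop :=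
  MemLp y' 2 (volume.restrict (Ioc (0:ℝ) T)) ∧
  y 0 = ξ ∧
  (∀ t ∈ Icc (0:ℝ) T, y t = ξ + ∫ s in (0:ℝ)..t, y' s) ∧
  (∀ t ∈ Icc (0:ℝ) T, |y t| ≤ 1) ∧
  (∀ᵐ t ∂(volume.restrict (Ioo (0:ℝ) T)),
    ∀ z ∈ Icc (-1:ℝ) 1, (relayG ρ₁ ρ₂ k (u t) - y' t) * (z - y t) ≤ 0)

open Metric Filter Topology

section Aux

lemma countable_isolated (S : Set ℝ) :
    {x | x ∈ S ∧ 𝓝[S \ {x}] x = ⊥}.Countable := by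
  set T₀ : Set ℝ := {x | x ∈ S ∧ 𝓝[S \ {x}] x = ⊥} with hT₀
  have key : ∀ x ∈ T₀, ∃ ε > 0, S ∩ ball x ε ⊆ {x} := by
    intro x hx
    have h := hx.2
    have : ∅ ∈ 𝓝[S \ {x}] x := by rw [h]; exact mem_bot
    rcases mem_nhdsWithin.1 this with ⟨U, hUo, hxU, hU⟩
    rcases Metric.isOpen_iff.1 hUo x hxU with ⟨ε, hε, hball⟩
    refine ⟨ε, hε, fun z hz => ?_⟩
    by_contra hzx
    exact hU ⟨hball hz.2, hz.1, hzx⟩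
  choose! ε hε hsep using key
  have hdisj : T₀.PairwiseDisjoint (fun x => ball x (ε x / 2)) := by
    intro a ha b hb hab
    refine Set.disjoint_left.2 fun z hza hzb => ?_
    have hbS : b ∈ S := hb.1
    have haS : a ∈ S := ha.1
    have h1 : ε a ≤ dist b a := by
      by_contra h
      push_neg at h
      exact hab (Eq.symm (hsep a ha ⟨hbS, by rwa [mem_ball]⟩))
    have h2 : ε b ≤ dist a b := by
      by_contra h
      push_neg at h
      exact hab (hsep b hb ⟨haS, by rwa [mem_ball]⟩)
    have := dist_triangle a z b
    rw [mem_ball] at hza hzb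
    rw [dist_comm b a] at h1
    rw [dist_comm z a] at hza
    linarith [dist_comm z b ▸ hzb]
  exact hdisj.countable_of_isOpen (fun x _ => isOpen_ball)
    (fun x hx => ⟨x, mem_ball_self (by linarith [hε x hx])⟩)

lemma deriv_zero_of_accPt {y : ℝ → ℝ} {d c x : ℝ} {S : Set ℝ}
    (hd : HasDerivAt y d x) (hne : 𝓝[S \ {x}] x ≠ ⊥)
    (hc : ∀ s ∈ S, y s = c) (hx : x ∈ S) : d = 0 := by
  have hslope : Tendsto (slope y x) (𝓝[≠] x) (𝓝 d) :=
    hasDerivAt_iff_tendsto_slope.1 hd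
  have hsub : (𝓝[S \ {x}] x) ≤ 𝓝[≠] x :=
    nhdsWithin_mono x (fun z hz => hz.2)
  haveI : (𝓝[S \ {x}] x).NeBot := ⟨hne⟩
  have h1 : Tendsto (slope y x) (𝓝[S \ {x}] x) (𝓝 d) := hslope.mono_left hsub
  have h2 : Tendsto (slope y x) (𝓝[S \ {x}] x) (𝓝 0) := by
    have heq : ∀ᶠ z in 𝓝[S \ {x}] x, slope y x z = 0 := by
      filter_upwards [eventually_mem_nhdsWithin] with z hz
      rw [slope_def_field, hc z hz.1, hc x hx]
      simp
    rw [tendsto_congr' heq]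
    exact tendsto_const_nhds
  exact tendsto_nhds_unique h1 h2

lemma ae_hasDerivAt_primitive (f : ℝ → ℝ) (hf : Integrable f volume) :
    ∀ᵐ x ∂(volume : Measure ℝ),
      HasDerivAt (fun t => ∫ s in (0:ℝ)..t, f s) (f x) x := by
  have hloc : LocallyIntegrable f volume := hf.locallyIntegrable
  filter_upwards [IsUnifLocDoublingMeasure.ae_tendsto_average_norm_sub
    (μ := (volume : Measure ℝ)) hloc 1] with x hx
  -- Lebesgue point property specialized along the punctured neighborhood filter
  have hδ : Tendsto (fun x' : ℝ => |x' - x|) (𝓝[≠] x) (𝓝[>] 0) := by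
    apply tendsto_nhdsWithin_of_tendsto_nhds_of_eventually_within
    · have h0 : Tendsto (fun x' : ℝ => |x' - x|) (𝓝 x) (𝓝 0) := by
        have : Tendsto (fun x' : ℝ => x' - x) (𝓝 x) (𝓝 0) := by
          simpa using (tendsto_id (x := 𝓝 x)).sub_const x
        simpa using this.abs
      exact h0.mono_left nhdsWithin_le_nhds
    · filter_upwards [eventually_mem_nhdsWithin] with z hz
      exact abs_pos.2 (sub_ne_zero.2 hz)
  have havg : Tendsto (fun x' : ℝ => ⨍ y in closedBall x |x' - x|, ‖f y - f x‖)
      (𝓝[≠] x) (𝓝 0) := by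
    apply hx (fun _ => x) (fun x' => |x' - x|) hδ
    filter_upwards with z using by simp [abs_nonneg]
  have havg2 : Tendsto (fun x' : ℝ => 2 * ⨍ y in closedBall x |x' - x|, ‖f y - f x‖)
      (𝓝[≠] x) (𝓝 0) := by simpa using havg.const_mul 2
  rw [hasDerivAt_iff_tendsto_slope]
  rw [tendsto_iff_norm_sub_tendsto_zero]
  apply squeeze_zero' (Filter.Eventually.of_forall fun z => norm_nonneg _) ?_ havg2
  -- the key bound
  filter_upwards [eventually_mem_nhdsWithin] with x' (hx' : x' ≠ x)
  set r : ℝ := |x' - x| with hr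
  have hrpos : 0 < r := abs_pos.2 (sub_ne_zero.2 hx')
  have hii : ∀ a b : ℝ, IntervalIntegrable f volume a b := fun a b =>
    hf.intervalIntegrable
  have hFF : (∫ s in (0:ℝ)..x', f s) - ∫ s in (0:ℝ)..x, f s = ∫ s in x..x', f s := by
    rw [← intervalIntegral.integral_add_adjacent_intervals (hii 0 x) (hii x x')]
    ring
  have hsl : slope (fun t => ∫ s in (0:ℝ)..t, f s) x x' - f x
      = (x' - x)⁻¹ * (∫ s in x..x', (f s - f x)) := by
    have hne : x' - x ≠ 0 := sub_ne_zero.2 hx'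
    rw [slope_def_field, hFF, div_eq_inv_mul,
      intervalIntegral.integral_sub (hii x x') (intervalIntegrable_const),
      intervalIntegral.integral_const, smul_eq_mul, mul_sub,
      inv_mul_cancel_left₀ hne]
  have hsubset : Set.uIoc x x' ⊆ closedBall x r := by
    intro z hz
    rw [mem_closedBall, Real.dist_eq]
    rcases le_total x x' with h | h
    · rw [uIoc_of_le h] at hz
      rw [abs_of_nonneg (by linarith [hz.1.le]), hr, abs_of_nonneg (by linarith)]
      linarith [hz.2]
    · rw [uIoc_of_ge h] at hz
      rw [abs_of_nonpos (by linarith [hz.2]), hr, abs_of_nonpos (by linarith)]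
      linarith [hz.1.le]
  have hint : IntegrableOn (fun s => ‖f s - f x‖) (closedBall x r) volume :=
    ((hf.integrableOn.sub (integrableOn_const measure_closedBall_lt_top.ne)).norm)
  have hbound1 : ‖∫ s in x..x', (f s - f x)‖ ≤ ∫ s in closedBall x r, ‖f s - f x‖ := by
    refine (intervalIntegral.norm_integral_le_integral_norm_uIoc).trans ?_
    apply setIntegral_mono_set hint
    · exact Filter.Eventually.of_forall fun z => norm_nonneg _
    · exact HasSubset.Subset.eventuallyLE hsubset
  have hvol : (volume (closedBall x r)).toReal = 2 * r := by
    rw [Real.volume_closedBall, ENNReal.toReal_ofReal (by linarith)]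
  have havg_eq : ∫ s in closedBall x r, ‖f s - f x‖
      = (2 * r) * ⨍ s in closedBall x r, ‖f s - f x‖ := by
    rw [setAverage_eq, measureReal_def, hvol, smul_eq_mul, ← mul_assoc, mul_inv_cancel₀ (by linarith), one_mul]
  calc ‖slope (fun t => ∫ s in (0:ℝ)..t, f s) x x' - f x‖
      = r⁻¹ * ‖∫ s in x..x', (f s - f x)‖ := by
        rw [hsl, norm_mul, norm_inv, Real.norm_eq_abs, Real.norm_eq_abs, hr]
    _ ≤ r⁻¹ * ((2 * r) * ⨍ s in closedBall x r, ‖f s - f x‖) := by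
        apply mul_le_mul_of_nonneg_left _ (by positivity)
        rw [← havg_eq]; exact hbound1
    _ = 2 * ⨍ s in closedBall x r, ‖f s - f x‖ := by
        rw [mul_comm 2 r, mul_assoc r 2, ← mul_assoc r⁻¹ r, inv_mul_cancel₀ (ne_of_gt hrpos),
          one_mul]

end Aux

/-- Characterization of the Lagrange multiplier `q(t) = g(u(t)) − y'(t)` (eq. (2.13)):
`q` is the projection of `g(u(t))` onto `∂χ_{[−1,1]}(y(t))`. -/
theorem dyn_relay_multiplier_characterization (T ρ₁ ρ₂ k : ℝ)
    (hT : 0 < T) (hρ : ρ₁ < ρ₂) (hk : 0 < k)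
    (u : ℝ → ℝ) (hu : MemLp u 2 (volume.restrict (Ioc (0:ℝ) T)))
    (ξ : ℝ) (hξ : ξ ∈ Icc (-1:ℝ) 1)
    (y y' : ℝ → ℝ) (hy : IsDynRelay T ρ₁ ρ₂ k u ξ y y') :
    ∀ᵐ t ∂(volume.restrict (Ioo (0:ℝ) T)),
      ((-1 < y t ∧ y t < 1) → relayG ρ₁ ρ₂ k (u t) - y' t = 0) ∧
      (y t = -1 → relayG ρ₁ ρ₂ k (u t) - y' t = min (relayG ρ₁ ρ₂ k (u t)) 0) ∧
      (y t = 1 → relayG ρ₁ ρ₂ k (u t) - y' t = max (relayG ρ₁ ρ₂ k (u t)) 0) := by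
  obtain ⟨hy2, hy0, hyFTC, hybd, hVI⟩ := hy
  haveI : IsFiniteMeasure (volume.restrict (Ioc (0:ℝ) T)) :=
    ⟨by rw [Measure.restrict_apply_univ]; exact measure_Ioc_lt_top⟩
  have hint : IntegrableOn y' (Ioc (0:ℝ) T) volume := hy2.integrable (by norm_num)
  set f : ℝ → ℝ := (Ioc (0:ℝ) T).indicator y' with hfdef
  have hfi : Integrable f volume := (integrable_indicator_iff measurableSet_Ioc).2 hint
  have hIeq : ∀ t ∈ Icc (0:ℝ) T, (∫ s in (0:ℝ)..t, y' s) = ∫ s in (0:ℝ)..t, f s := by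
    intro t ht
    rw [intervalIntegral.integral_of_le ht.1, intervalIntegral.integral_of_le ht.1,
      hfdef, setIntegral_indicator measurableSet_Ioc]
    congr 1
    rw [Set.Ioc_inter_Ioc]
    simp [ht.2, min_eq_left ht.2]
  -- a.e. differentiability of y with derivative y'
  have hder : ∀ᵐ x ∂(volume.restrict (Ioo (0:ℝ) T)), HasDerivAt y (y' x) x := by
    have h1 : ∀ᵐ x ∂(volume.restrict (Ioo (0:ℝ) T)),
        HasDerivAt (fun t => ∫ s in (0:ℝ)..t, f s) (f x) x :=
      ae_restrict_of_ae (ae_hasDerivAt_primitive f hfi)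
    filter_upwards [h1, ae_restrict_mem measurableSet_Ioo] with x hx hxm
    have hyx : (fun t => ξ + ∫ s in (0:ℝ)..t, f s) =ᶠ[𝓝 x] y := by
      filter_upwards [Ioo_mem_nhds hxm.1 hxm.2] with z hz
      rw [hyFTC z (Ioo_subset_Icc_self hz), hIeq z (Ioo_subset_Icc_self hz)]
    have hfx : f x = y' x := by
      rw [hfdef, indicator_of_mem (Ioo_subset_Ioc_self hxm)]
    have := (hx.const_add ξ).congr_of_eventuallyEq hyx.symm
    rwa [hfx] at this
  -- derivative vanishes a.e. on level sets y = c
  have hlevel : ∀ c : ℝ, ∀ᵐ x ∂(volume.restrict (Ioo (0:ℝ) T)),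
      (HasDerivAt y (y' x) x → x ∈ Ioo (0:ℝ) T → y x = c → y' x = 0) := by
    intro c
    set S : Set ℝ := {s | s ∈ Ioo (0:ℝ) T ∧ y s = c} with hS
    set B : Set ℝ := {x | x ∈ S ∧ 𝓝[S \ {x}] x = ⊥} with hB
    have hBc : B.Countable := countable_isolated S
    have hBnull : (volume.restrict (Ioo (0:ℝ) T)) B = 0 :=
      le_antisymm (le_trans (Measure.restrict_le_self B)
        (le_of_eq (hBc.measure_zero _))) zero_le
    have hae : ∀ᵐ x ∂(volume.restrict (Ioo (0:ℝ) T)), x ∉ B := by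
      rw [ae_iff]
      simpa using hBnull
    filter_upwards [hae] with x hxB hd hxm hyc
    by_cases hbot : 𝓝[S \ {x}] x = ⊥
    · exact absurd ⟨⟨hxm, hyc⟩, hbot⟩ hxB
    · exact deriv_zero_of_accPt hd hbot (fun s hs => hs.2) ⟨hxm, hyc⟩
  filter_upwards [hVI, hder, hlevel 1, hlevel (-1), ae_restrict_mem measurableSet_Ioo]
    with t hVIt hdt hl1 hlm1 hmem
  refine ⟨?_, ?_, ?_⟩
  · rintro ⟨ha, hb⟩
    have e1 := hVIt 1 ⟨by norm_num, le_refl 1⟩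
    have e2 := hVIt (-1) ⟨le_refl _, by norm_num⟩
    have hq1 : relayG ρ₁ ρ₂ k (u t) - y' t ≤ 0 := by nlinarith
    have hq2 : 0 ≤ relayG ρ₁ ρ₂ k (u t) - y' t := by nlinarith
    linarith
  · intro hyt
    have hy'0 : y' t = 0 := hlm1 hdt hmem hyt
    have e1 := hVIt 1 ⟨by norm_num, le_refl 1⟩
    rw [hyt, hy'0] at e1
    have hg : relayG ρ₁ ρ₂ k (u t) ≤ 0 := by nlinarith
    rw [hy'0, sub_zero, min_eq_left hg]
  · intro hyt
    have hy'0 : y' t = 0 := hl1 hdt hmem hyt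
    have e2 := hVIt (-1) ⟨le_refl _, by norm_num⟩
    rw [hyt, hy'0] at e2
    have hg : 0 ≤ relayG ρ₁ ρ₂ k (u t) := by nlinarith
    rw [hy'0, sub_zero, max_eq_left hg]
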